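/- Let $A : \mathbb{R} \to \mathbb{R}^{m\times m}$ be continuous and let $\Phi_t$ be the fundamental matrix solution of $\dot\Phi_t = A_t\Phi_t$, $\Phi_0 = I$. Let $P \in \mathbb{R}^{m\times m}$ be symmetric positive semi-definite and define $\bar C_t := \int_0^t \Phi_s^T C_s^T R_s^{-1} C_s \Phi_s\,ds$ where $C_s, R_s$ are continuous with $R_s$ symmetric positive definite. Then $P_t := \Phi_t \sqrt{P}\,(I + \sqrt{P}\,\bar C_t\,\sqrt{P})^{-1}\sqrt{P}\,\Phi_t^T$ solves the noise-free Riccati equation $\dot P_t = A_t P_t + P_t A_t^T - P_t C_t^T R_t^{-1} C_t P_t$ with $P_0 = P$. -/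

import Mathlib

open Matrix MeasureTheory intervalIntegral
open scoped Matrix.Norms.L2Operator

open scoped ComplexOrder in
/-- The positive semidefinite square root (removed from Mathlib; old definition restored). -/
noncomputable def Matrix.PosSemidef.sqrt {n : Type*} [Fintype n] [DecidableEq n] {R : Type*} [RCLike R]
    {A : Matrix n n R} (hA : A.PosSemidef) : Matrix n n R :=
  hA.1.eigenvectorUnitary.1 * diagonal ((↑) ∘ Real.sqrt ∘ hA.1.eigenvalues) *
  (star hA.1.eigenvectorUnitary : Matrix n n R)

section Aux

variable {m : ℕ}

/-- Transpose as a continuous linear map (w.r.t. the L2 operator norm). -/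
noncomputable def trCLM (m : ℕ) :
    Matrix (Fin m) (Fin m) ℝ →L[ℝ] Matrix (Fin m) (Fin m) ℝ :=
  LinearMap.toContinuousLinearMap
    ((Matrix.transposeLinearEquiv (Fin m) (Fin m) ℝ ℝ).toLinearMap)

@[simp] lemma trCLM_apply (M : Matrix (Fin m) (Fin m) ℝ) : trCLM m M = Mᵀ := rfl

/-- Quadratic form evaluation as a continuous linear map. -/
noncomputable def quadCLM (m : ℕ) (x : Fin m → ℝ) :
    Matrix (Fin m) (Fin m) ℝ →L[ℝ] ℝ :=
  LinearMap.toContinuousLinearMap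
    { toFun := fun M => x ⬝ᵥ M.mulVec x
      map_add' := fun M N => by simp [Matrix.add_mulVec, dotProduct_add]
      map_smul' := fun c M => by simp [Matrix.smul_mulVec, dotProduct_smul] }

@[simp] lemma quadCLM_apply (x : Fin m → ℝ) (M : Matrix (Fin m) (Fin m) ℝ) :
    quadCLM m x M = x ⬝ᵥ M.mulVec x := rfl

lemma integral_posSemidef {f : ℝ → Matrix (Fin m) (Fin m) ℝ}
    (hf : Continuous f) (h : ∀ s, (f s).PosSemidef) {t : ℝ} (ht : 0 ≤ t) :
    (∫ s in (0:ℝ)..t, f s).PosSemidef := by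
  have hint : IntervalIntegrable f MeasureTheory.volume 0 t := hf.intervalIntegrable 0 t
  refine Matrix.PosSemidef.of_dotProduct_mulVec_nonneg ?_ ?_
  · have h1 : (∫ s in (0:ℝ)..t, f s)ᵀ = ∫ s in (0:ℝ)..t, (f s)ᵀ := by
      simpa using ((trCLM m).intervalIntegral_comp_comm hint).symm
    rw [Matrix.IsHermitian, Matrix.conjTranspose_eq_transpose_of_trivial, h1]
    refine intervalIntegral.integral_congr fun s _ => ?_
    have := (h s).1
    rwa [Matrix.IsHermitian, Matrix.conjTranspose_eq_transpose_of_trivial] at this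
  · intro x
    have := (quadCLM m x).intervalIntegral_comp_comm hint (a := 0) (b := t)
    have hx : star x = x := by
      funext i; simp
    rw [hx]
    rw [← quadCLM_apply x, ← this]
    refine intervalIntegral.integral_nonneg ht fun s _ => ?_
    have := (h s).dotProduct_mulVec_nonneg x
    rw [hx] at this
    simpa using this

lemma hasDerivAt_matrix_inv {M : ℝ → Matrix (Fin m) (Fin m) ℝ}
    {M' : Matrix (Fin m) (Fin m) ℝ} {t : ℝ}
    (hM : HasDerivAt M M' t) (hu : IsUnit (M t)) :
    HasDerivAt (fun s => (M s)⁻¹) (-((M t)⁻¹ * M' * (M t)⁻¹)) t := by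
  have h1 : HasFDerivAt Ring.inverse
      (-(ContinuousLinearMap.mulLeftRight ℝ (Matrix (Fin m) (Fin m) ℝ)
        ↑hu.unit⁻¹ ↑hu.unit⁻¹)) (M t) := by
    simpa [hu.unit_spec] using hasFDerivAt_ringInverse (𝕜 := ℝ) hu.unit
  have h2 := h1.comp_hasDerivAt t hM
  have hinv : (↑hu.unit⁻¹ : Matrix (Fin m) (Fin m) ℝ) = (M t)⁻¹ := by
    rw [Matrix.coe_units_inv, hu.unit_spec]
  have h3 : HasDerivAt (fun s => Ring.inverse (M s)) (-((M t)⁻¹ * M' * (M t)⁻¹)) t := by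
    simp [ContinuousLinearMap.mulLeftRight_apply, hinv] at h2
    exact h2
  simpa [Matrix.nonsing_inv_eq_ringInverse] using h3

lemma psd_sqrt_mul_self {P : Matrix (Fin m) (Fin m) ℝ} (hP : P.PosSemidef) :
    hP.sqrt * hP.sqrt = P := by
  have hU : (star hP.1.eigenvectorUnitary : Matrix (Fin m) (Fin m) ℝ) * hP.1.eigenvectorUnitary.1 = 1 :=
    Unitary.star_mul_self_of_mem hP.1.eigenvectorUnitary.2
  have hsp := hP.1.spectral_theorem
  rw [Unitary.conjStarAlgAut_apply] at hsp
  conv_rhs => rw [hsp]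
  simp only [Matrix.PosSemidef.sqrt]
  rw [show ∀ a b c d e f : Matrix (Fin m) (Fin m) ℝ, a * b * c * (d * e * f) = a * b * (c * d) * e * f
    from fun a b c d e f => by simp only [Matrix.mul_assoc]]
  rw [hU, Matrix.mul_one, Matrix.mul_assoc _ (diagonal _) (diagonal _), diagonal_mul_diagonal]
  congr 3
  funext i
  simp [Real.mul_self_sqrt (hP.eigenvalues_nonneg i)]

lemma psd_sqrt_herm {P : Matrix (Fin m) (Fin m) ℝ} (hP : P.PosSemidef) :
    hP.sqrtᴴ = hP.sqrt := by
  simp only [Matrix.PosSemidef.sqrt]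
  simp [Matrix.star_eq_conjTranspose, Matrix.conjTranspose_eq_transpose_of_trivial, Matrix.mul_assoc]

end Aux

/-- The explicit formula
`P_t = Φ_t √P (I + √P C̄_t √P)⁻¹ √P Φ_tᵀ` solves the noise-free Riccati equation
`Ṗ_t = A_t P_t + P_t A_tᵀ - P_t C_tᵀ R_t⁻¹ C_t P_t` with `P_0 = P`. -/
theorem riccati_explicit_solution
    {m n : ℕ}
    (A : ℝ → Matrix (Fin m) (Fin m) ℝ)
    (C : ℝ → Matrix (Fin n) (Fin m) ℝ)
    (R : ℝ → Matrix (Fin n) (Fin n) ℝ)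
    (hA : Continuous A) (hC : Continuous C) (hR : Continuous R)
    (hRpd : ∀ t, (R t).PosDef)
    (Φ : ℝ → Matrix (Fin m) (Fin m) ℝ)
    (hΦ : ∀ t, HasDerivAt Φ (A t * Φ t) t)
    (hΦ0 : Φ 0 = 1)
    (P : Matrix (Fin m) (Fin m) ℝ)
    (hP : P.PosSemidef)
    (Cbar : ℝ → Matrix (Fin m) (Fin m) ℝ)
    (hCbar : ∀ t, Cbar t = ∫ s in (0:ℝ)..t, (Φ s)ᵀ * (C s)ᵀ * (R s)⁻¹ * C s * Φ s)
    (Pt : ℝ → Matrix (Fin m) (Fin m) ℝ)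
    (hPt : ∀ t, Pt t = Φ t * hP.sqrt * (1 + hP.sqrt * Cbar t * hP.sqrt)⁻¹ * hP.sqrt * (Φ t)ᵀ) :
    Pt 0 = P ∧
      ∀ t > (0:ℝ),
        HasDerivAt Pt
          (A t * Pt t + Pt t * (A t)ᵀ - Pt t * (C t)ᵀ * (R t)⁻¹ * C t * Pt t) t := by
  set S := hP.sqrt with hS
  -- continuity facts
  have hΦc : Continuous Φ := by
    rw [continuous_iff_continuousAt]; exact fun t => (hΦ t).continuousAt
  have hRinv : Continuous fun s => (R s)⁻¹ := by
    have : (fun s => (R s)⁻¹) = fun s => Ring.inverse (R s) := by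
      funext s; rw [Matrix.nonsing_inv_eq_ringInverse]
    rw [this, continuous_iff_continuousAt]
    intro s
    have h1 := NormedRing.inverse_continuousAt (hRpd s).isUnit.unit
    rw [IsUnit.unit_spec] at h1
    exact h1.comp hR.continuousAt
  have hGc : Continuous fun s => (Φ s)ᵀ * (C s)ᵀ * (R s)⁻¹ * C s * Φ s :=
    ((((hΦc.matrix_transpose.matrix_mul hC.matrix_transpose).matrix_mul
      hRinv).matrix_mul hC).matrix_mul hΦc)
  -- derivative of Cbar
  have hCbar' : ∀ t, HasDerivAt Cbar ((Φ t)ᵀ * (C t)ᵀ * (R t)⁻¹ * C t * Φ t) t := by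
    intro t
    have : Cbar = fun t => ∫ s in (0:ℝ)..t, (Φ s)ᵀ * (C s)ᵀ * (R s)⁻¹ * C s * Φ s :=
      funext hCbar
    rw [this]
    exact (hGc.integral_hasStrictDerivAt 0 t).hasDerivAt
  -- positive semidefiniteness of the integrand and Cbar
  have hGpsd : ∀ s, ((Φ s)ᵀ * (C s)ᵀ * (R s)⁻¹ * C s * Φ s).PosSemidef := by
    intro s
    have h1 := (hRpd s).inv.posSemidef.conjTranspose_mul_mul_same (C s * Φ s)
    have : (C s * Φ s)ᴴ * (R s)⁻¹ * (C s * Φ s)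
        = (Φ s)ᵀ * (C s)ᵀ * (R s)⁻¹ * C s * Φ s := by
      rw [Matrix.conjTranspose_mul, Matrix.conjTranspose_eq_transpose_of_trivial,
        Matrix.conjTranspose_eq_transpose_of_trivial]
      simp [Matrix.mul_assoc]
    rwa [this] at h1
  have hCbarPsd : ∀ t : ℝ, 0 ≤ t → (Cbar t).PosSemidef := by
    intro t ht
    rw [hCbar t]
    exact integral_posSemidef hGc hGpsd ht
  -- invertibility of M t
  have hMunit : ∀ t : ℝ, 0 ≤ t → IsUnit (1 + S * Cbar t * S) := by
    intro t ht
    have hpsd : (S * Cbar t * S).PosSemidef := by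
      have := (hCbarPsd t ht).conjTranspose_mul_mul_same S
      rwa [psd_sqrt_herm hP] at this
    exact (Matrix.PosDef.add_posSemidef Matrix.PosDef.one hpsd).isUnit
  constructor
  · -- initial condition
    rw [hPt 0, hCbar 0]
    simp [hΦ0, hS, psd_sqrt_mul_self hP]
  · intro t ht
    have hPtfun : Pt = fun s => Φ s * S * (1 + S * Cbar s * S)⁻¹ * S * (Φ s)ᵀ :=
      funext hPt
    set N := (1 + S * Cbar t * S)⁻¹ with hN
    set G := (Φ t)ᵀ * (C t)ᵀ * (R t)⁻¹ * C t * Φ t with hG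
    have hM : HasDerivAt (fun s => 1 + S * Cbar s * S) (S * G * S) t :=
      (((hCbar' t).const_mul S).mul_const S).const_add 1
    have hNd : HasDerivAt (fun s => (1 + S * Cbar s * S)⁻¹) (-(N * (S * G * S) * N)) t :=
      hasDerivAt_matrix_inv hM (hMunit t ht.le)
    have hTd : HasDerivAt (fun s => (Φ s)ᵀ) ((A t * Φ t)ᵀ) t := by
      have := (trCLM m).hasFDerivAt.comp_hasDerivAt t (hΦ t)
      simpa [Function.comp_def] using this
    have h4 := ((((hΦ t).mul_const S).mul hNd).mul_const S).mul hTd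
    rw [hPt t, hPtfun]
    have h5 : HasDerivAt (fun s => Φ s * S * (1 + S * Cbar s * S)⁻¹ * S * (Φ s)ᵀ) _ t := h4
    convert h5 using 1
    rw [hN, hG]
    simp only [Matrix.transpose_mul, Matrix.mul_assoc, add_mul, mul_neg, neg_mul,
      sub_eq_add_neg, neg_neg, Pi.mul_apply]
    abel
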